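/- Let U : 𝔻 → ℝ be defined by U(z) = (1/2π)·[∫₀^{π} K₂(z·e^{-iθ}) dθ - ∫_{π}^{2π} K₂(z·e^{-iθ}) dθ], i.e. U = K₂[χ_{𝕋⁺} - χ_{𝕋⁻}] where χ_{𝕋⁺} and χ_{𝕋⁻} are the characteristic functions of the upper and lower halves of the unit circle. Then U_z(0) = -2i/π, and consequently |U_z(0)| + |U_{z̄}(0)| = 4/π; in particular the bound ‖D_u(0)‖ ≤ 4/π for maps with the K₂ representation and boundary data of modulus at most 1 is sharp. -/

import Mathlib

open Real MeasureTheory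

/-- The kernel `K₂(z) = (1/2)·(1-|z|²)³/|1-z|⁴`. -/
noncomputable def K2ker (z : ℂ) : ℝ :=
  (1 - ‖z‖ ^ 2) ^ 3 / (2 * ‖1 - z‖ ^ 4)

/-- The harmonic Poisson kernel `P(z) = (1-|z|²)/|1-z|²`. -/
noncomputable def Pker (z : ℂ) : ℝ :=
  (1 - ‖z‖ ^ 2) / ‖1 - z‖ ^ 2

/-- The biharmonic Green function `G(z,w)`. -/
noncomputable def Gker (z w : ℂ) : ℝ :=
  ‖z - w‖ ^ 2 *
      Real.log (‖(1 - z * (starRingEnd ℂ) w) / (z - w)‖ ^ 2)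
    - (1 - ‖z‖ ^ 2) * (1 - ‖w‖ ^ 2)

/-- Poisson integral `P[φ](z)`. -/
noncomputable def Pint (φ : ℂ → ℂ) (z : ℂ) : ℂ :=
  (1 / (2 * Real.pi)) *
    ∫ θ in (0:ℝ)..(2 * Real.pi),
      (Pker (z * Complex.exp (-(θ:ℂ) * Complex.I)) : ℂ) * φ (Complex.exp ((θ:ℂ) * Complex.I))

/-- The integral operator `K₂[φ](z)`. -/
noncomputable def K2int (φ : ℂ → ℂ) (z : ℂ) : ℂ :=
  (1 / (2 * Real.pi)) *
    ∫ θ in (0:ℝ)..(2 * Real.pi),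
      (K2ker (z * Complex.exp (-(θ:ℂ) * Complex.I)) : ℂ) * φ (Complex.exp ((θ:ℂ) * Complex.I))

/-- The Green potential `G[g](z) = (1/16)∫_𝔻 G(z,w) g(w) dA(w)`. -/
noncomputable def Gint (g : ℂ → ℂ) (z : ℂ) : ℂ :=
  (1 / 16) * ∫ w in Metric.ball (0:ℂ) 1, (Gker z w : ℂ) * g w

/-- Wirtinger derivative `f_z = (1/2)(f_x - i f_y)`. -/
noncomputable def wderivZ (f : ℂ → ℂ) (z : ℂ) : ℂ :=
  (1 / 2) * (fderiv ℝ f z 1 - Complex.I * fderiv ℝ f z Complex.I)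

/-- Wirtinger derivative `f_{z̄} = (1/2)(f_x + i f_y)`. -/
noncomputable def wderivZbar (f : ℂ → ℂ) (z : ℂ) : ℂ :=
  (1 / 2) * (fderiv ℝ f z 1 + Complex.I * fderiv ℝ f z Complex.I)

/-- Sup norm over the unit circle. -/
noncomputable def normInfCircle (f : ℂ → ℂ) : ℝ :=
  sSup ((fun ζ => ‖f ζ‖) '' {ζ : ℂ | ‖ζ‖ = 1})

/-- Sup norm over the unit disk. -/
noncomputable def normInfDisk (g : ℂ → ℂ) : ℝ :=
  sSup ((fun ζ => ‖g ζ‖) '' Metric.ball (0:ℂ) 1)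

/-- The explicit solution `Φ` of the inhomogeneous biharmonic Dirichlet problem. -/
noncomputable def solPhi (f h g : ℂ → ℂ) (z : ℂ) : ℂ :=
  (((1 - ‖z‖ ^ 2) / 2 : ℝ) : ℂ) * Pint (fun ζ => f ζ + h ζ) z
    + K2int f z - Gint g z

/- ### Auxiliary machinery -/

noncomputable def Qd (w : ℂ) : ℂ →L[ℝ] ℝ :=
  (2*w.re) • Complex.reCLM + (2*w.im) • Complex.imCLM

lemma Qd_apply (w v : ℂ) : Qd w v = 2*(w.re*v.re + w.im*v.im) := by
  simp [Qd]; ring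

lemma hQd (w : ℂ) : HasFDerivAt Complex.normSq (Qd w) w := by
  have h1 : HasFDerivAt (fun z : ℂ => z.re * z.re + z.im * z.im)
      ((w.re • Complex.reCLM + w.re • Complex.reCLM) +
       (w.im • Complex.imCLM + w.im • Complex.imCLM)) w :=
    (Complex.reCLM.hasFDerivAt.mul Complex.reCLM.hasFDerivAt).add
      (Complex.imCLM.hasFDerivAt.mul Complex.imCLM.hasFDerivAt)
  have h2 : (fun z : ℂ => Complex.normSq z) = fun z : ℂ => z.re * z.re + z.im * z.im := by
    funext z; simp [Complex.normSq_apply]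
  rw [show Complex.normSq = fun z : ℂ => Complex.normSq z from rfl, h2]
  convert h1 using 1
  ext v <;> simp [Qd] <;> ring

lemma Qd_abs_le (w v : ℂ) : |Qd w v| ≤ 2 * ‖w‖ * ‖v‖ := by
  rw [Qd_apply]
  have h : w.re*v.re + w.im*v.im = ((starRingEnd ℂ) w * v).re := by
    simp [Complex.mul_re]
  rw [h]
  calc |2 * ((starRingEnd ℂ) w * v).re| = 2 * |((starRingEnd ℂ) w * v).re| := by
        rw [abs_mul]; norm_num
    _ ≤ 2 * ‖(starRingEnd ℂ) w * v‖ := by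
        have := Complex.abs_re_le_norm ((starRingEnd ℂ) w * v); linarith
    _ = 2 * ‖w‖ * ‖v‖ := by
        simp [map_mul]; ring

noncomputable def Dg (w : ℂ) : ℂ →L[ℝ] ℝ :=
  ((1 - Complex.normSq w)^3 * (-(2*(2*Complex.normSq (1-w))) / (2*Complex.normSq (1-w)^2)^2)) •
    ((Qd (1-w)).comp (-(ContinuousLinearMap.id ℝ ℂ)))
  + ((2*Complex.normSq (1-w)^2)⁻¹ * (3*(1 - Complex.normSq w)^2)) • (-(Qd w))

lemma Dg_def (w : ℂ) : Dg w =
  ((1 - Complex.normSq w)^3 * (-(2*(2*Complex.normSq (1-w))) / (2*Complex.normSq (1-w)^2)^2)) •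
    ((Qd (1-w)).comp (-(ContinuousLinearMap.id ℝ ℂ)))
  + ((2*Complex.normSq (1-w)^2)⁻¹ * (3*(1 - Complex.normSq w)^2)) • (-(Qd w)) := rfl

set_option maxHeartbeats 1000000 in
lemma Dg_zero_apply (v : ℂ) : Dg 0 v = 2 * v.re := by
  simp only [Dg, ContinuousLinearMap.add_apply, ContinuousLinearMap.coe_smul',
    Pi.smul_apply, smul_eq_mul, ContinuousLinearMap.comp_apply,
    ContinuousLinearMap.neg_apply, ContinuousLinearMap.coe_id', id_eq]
  rw [Qd_apply, Qd_apply]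
  simp only [Complex.normSq_zero, sub_zero, Complex.normSq_one, Complex.one_re,
    Complex.one_im, Complex.zero_re, Complex.zero_im, Complex.neg_re, Complex.neg_im]
  norm_num

lemma K2ker_eq (z : ℂ) :
    K2ker z = (1 - Complex.normSq z)^3 * (2 * Complex.normSq (1-z)^2)⁻¹ := by
  rw [K2ker, ← Complex.sq_norm, ← Complex.sq_norm, div_eq_mul_inv]
  ring_nf

lemma hasDg (w : ℂ) (hw : w ≠ 1) : HasFDerivAt K2ker (Dg w) w := by
  have hm : Complex.normSq (1 - w) ≠ 0 := by
    simpa [sub_eq_zero] using fun h => hw h.symm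
  have h2 : HasFDerivAt (fun z : ℂ => Complex.normSq (1 - z))
      ((Qd (1-w)).comp (-(ContinuousLinearMap.id ℝ ℂ))) w := by
    have hi : HasFDerivAt (fun z : ℂ => 1 - z) (-(ContinuousLinearMap.id ℝ ℂ)) w :=
      (hasFDerivAt_id w).const_sub 1
    exact (hQd (1 - w)).comp w hi
  have h3 : HasDerivAt (fun t : ℝ => (2 * t^2)⁻¹)
      (-(2*(2*Complex.normSq (1-w))) / (2*Complex.normSq (1-w)^2)^2) (Complex.normSq (1-w)) := by
    have := ((hasDerivAt_pow 2 (Complex.normSq (1-w))).const_mul 2).inv (by positivity)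
    simpa [Pi.inv_def] using this
  have h4 : HasFDerivAt (fun z : ℂ => (2 * Complex.normSq (1-z)^2)⁻¹)
      ((-(2*(2*Complex.normSq (1-w))) / (2*Complex.normSq (1-w)^2)^2) •
        ((Qd (1-w)).comp (-(ContinuousLinearMap.id ℝ ℂ)))) w :=
    by have := h3.comp_hasFDerivAt w h2; exact this
  have h5 : HasDerivAt (fun t : ℝ => (1 - t)^3) (-(3*(1 - Complex.normSq w)^2))
      (Complex.normSq w) := by
    have := ((hasDerivAt_id (Complex.normSq w)).const_sub 1).pow 3
    simp at this; exact this
  have h1 : HasFDerivAt (fun z : ℂ => (1 - Complex.normSq z)^3)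
      ((-(3*(1 - Complex.normSq w)^2)) • Qd w) w :=
    h5.comp_hasFDerivAt w (hQd w)
  have hfin := h1.mul h4
  have heq : (fun z : ℂ => K2ker z)
      = fun z => (1 - Complex.normSq z)^3 * (2 * Complex.normSq (1-z)^2)⁻¹ := by
    funext z; exact K2ker_eq z
  rw [show K2ker = fun z => K2ker z from rfl, heq]
  refine hfin.congr_fderiv ?_
  rw [Dg_def]
  ext v
  simp [smul_smul]

lemma Dg_norm_le (w : ℂ) (hw : ‖w‖ ≤ 1/2) : ‖Dg w‖ ≤ 300 := by
  have habs : (0:ℝ) ≤ ‖w‖ := norm_nonneg w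
  have hs : Complex.normSq w ≤ 1/4 := by
    rw [← Complex.sq_norm]; nlinarith
  have hs0 : 0 ≤ Complex.normSq w := Complex.normSq_nonneg w
  have hm1 : ‖1 - w‖ ≤ 3/2 := by
    have := norm_add_le (1:ℂ) (-w)
    simp only [norm_neg] at this
    calc ‖1 - w‖ = ‖1 + -w‖ := by ring_nf
      _ ≤ ‖(1:ℂ)‖ + ‖w‖ := by simpa using this
      _ ≤ 3/2 := by simp; linarith
  have hm2 : (1:ℝ)/2 ≤ ‖1 - w‖ := by
    have := norm_add_le (1-w) w
    simp at this
    linarith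
  have hml : 1/4 ≤ Complex.normSq (1-w) := by rw [← Complex.sq_norm]; nlinarith
  have hmu : Complex.normSq (1-w) ≤ 9/4 := by rw [← Complex.sq_norm]; nlinarith
  set s := Complex.normSq w with hsdef
  set m := Complex.normSq (1-w) with hmdef
  have hc1 : |(1 - s)^3 * (-(2*(2*m)) / (2*m^2)^2)| ≤ 64 := by
    rw [abs_mul]
    have e1 : |(1-s)^3| ≤ 1 := by
      rw [_root_.abs_pow, _root_.abs_of_nonneg (by linarith : (0:ℝ) ≤ 1 - s)]
      nlinarith [sq_nonneg (1-s)]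
    have e2 : |(-(2*(2*m)) / (2*m^2)^2)| ≤ 64 := by
      rw [abs_div]
      rw [_root_.abs_of_nonneg (by positivity : (0:ℝ) ≤ (2*m^2)^2), abs_neg,
        _root_.abs_of_nonneg (by linarith)]
      rw [div_le_iff₀ (by positivity)]
      have hm3 : 1/64 ≤ m^3 := by nlinarith [sq_nonneg (m - 1/4), sq_nonneg m]
      nlinarith [mul_nonneg (by linarith : (0:ℝ) ≤ m) (by linarith : (0:ℝ) ≤ m^3 - 1/64)]
    nlinarith [abs_nonneg ((1-s)^3), abs_nonneg (-(2*(2*m)) / (2*m^2)^2)]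
  have hc2 : |(2*m^2)⁻¹ * (3*(1 - s)^2)| ≤ 24 := by
    rw [abs_mul, abs_inv]
    rw [_root_.abs_of_nonneg (by positivity : (0:ℝ) ≤ 2*m^2),
      _root_.abs_of_nonneg (by positivity : (0:ℝ) ≤ 3*(1-s)^2)]
    have : (2*m^2)⁻¹ ≤ 8 := by
      rw [inv_le_comm₀ (by positivity) (by norm_num)]
      nlinarith
    nlinarith [sq_nonneg (1-s), inv_nonneg.mpr (by positivity : (0:ℝ) ≤ 2*m^2)]
  refine ContinuousLinearMap.opNorm_le_bound _ (by norm_num) fun v => ?_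
  rw [Dg_def]
  simp only [ContinuousLinearMap.add_apply, ContinuousLinearMap.coe_smul', Pi.smul_apply,
    smul_eq_mul, ContinuousLinearMap.comp_apply, ContinuousLinearMap.neg_apply,
    ContinuousLinearMap.coe_id', id_eq, Real.norm_eq_abs, ← hsdef, ← hmdef]
  have q1 : |Qd (1-w) (-v)| ≤ 3 * ‖v‖ := by
    have := Qd_abs_le (1-w) (-v)
    rw [norm_neg] at this
    nlinarith [norm_nonneg v]
  have q2 : |Qd w v| ≤ ‖v‖ := by
    have := Qd_abs_le w v
    nlinarith [norm_nonneg v]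
  calc |(1 - s)^3 * (-(2*(2*m)) / (2*m^2)^2) * Qd (1-w) (-v)
        + (2*m^2)⁻¹ * (3*(1 - s)^2) * (-(Qd w v))|
      ≤ |(1 - s)^3 * (-(2*(2*m)) / (2*m^2)^2) * Qd (1-w) (-v)|
        + |(2*m^2)⁻¹ * (3*(1 - s)^2) * (-(Qd w v))| := abs_add_le _ _
    _ ≤ 64 * (3 * ‖v‖) + 24 * ‖v‖ := by
        rw [abs_mul ((1 - s)^3 * (-(2*(2*m)) / (2*m^2)^2)) _,
          abs_mul ((2*m^2)⁻¹ * (3*(1 - s)^2)) _, abs_neg]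
        exact add_le_add (mul_le_mul hc1 q1 (abs_nonneg _) (by norm_num))
          (mul_le_mul hc2 q2 (abs_nonneg _) (by norm_num))
    _ ≤ 300 * ‖v‖ := by nlinarith [norm_nonneg v]

/- ### The circle parametrization -/

noncomputable def eC (θ : ℝ) : ℂ := Complex.exp (-(θ:ℂ) * Complex.I)

lemma abs_eC (θ : ℝ) : ‖eC θ‖ = 1 := by
  rw [eC, Complex.norm_exp]
  norm_num

lemma continuous_eC : Continuous eC := by
  unfold eC; fun_prop

lemma eC_re (θ : ℝ) : (eC θ).re = Real.cos θ := by
  rw [eC, show -(θ:ℂ) = ((-θ : ℝ) : ℂ) by push_cast; ring,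
    Complex.exp_ofReal_mul_I_re, Real.cos_neg]

lemma eC_mul_I_re (θ : ℝ) : (eC θ * Complex.I).re = Real.sin θ := by
  rw [Complex.mul_I_re, eC, show -(θ:ℂ) = ((-θ : ℝ) : ℂ) by push_cast; ring,
    Complex.exp_ofReal_mul_I_im, Real.sin_neg, neg_neg]

noncomputable def Fd (z : ℂ) (θ : ℝ) : ℂ →L[ℝ] ℝ :=
  (Dg (z * eC θ)).comp (ContinuousLinearMap.mul ℝ ℂ (eC θ))

lemma contF (x : ℂ) (hx : ‖x‖ < 1) :
    Continuous fun θ : ℝ => K2ker (x * eC θ) := by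
  have hne : ∀ θ : ℝ, (2 * Complex.normSq (1 - x * eC θ)^2) ≠ 0 := by
    intro θ
    have h1 : x * eC θ ≠ 1 := by
      intro h
      have : ‖x * eC θ‖ = 1 := by rw [h]; simp
      rw [norm_mul, abs_eC, mul_one] at this
      linarith
    have : Complex.normSq (1 - x * eC θ) ≠ 0 := by
      simpa [sub_eq_zero] using fun h => h1 h.symm
    positivity
  have heq : (fun θ : ℝ => K2ker (x * eC θ))
      = fun θ : ℝ => (1 - Complex.normSq (x * eC θ))^3
          * (2 * Complex.normSq (1 - x * eC θ)^2)⁻¹ := by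
    funext θ; exact K2ker_eq _
  rw [heq]
  have hc : Continuous fun θ : ℝ => x * eC θ := continuous_const.mul continuous_eC
  exact (((continuous_const.sub (Complex.continuous_normSq.comp hc)).pow 3).mul
    (((continuous_const.mul ((Complex.continuous_normSq.comp
      (continuous_const.sub hc)).pow 2))).inv₀ hne))

lemma hdiffF (θ : ℝ) (x : ℂ) (hx : ‖x‖ < 1) :
    HasFDerivAt (fun z : ℂ => K2ker (z * eC θ)) (Fd x θ) x := by
  have hne : x * eC θ ≠ 1 := by
    intro h
    have : ‖x * eC θ‖ = 1 := by rw [h]; simp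
    rw [norm_mul, abs_eC, mul_one] at this
    linarith
  have hmul : HasFDerivAt (fun z : ℂ => z * eC θ)
      (ContinuousLinearMap.mul ℝ ℂ (eC θ)) x := by
    have h := (ContinuousLinearMap.mul ℝ ℂ (eC θ)).hasFDerivAt (x := x)
    have heq : (fun z : ℂ => z * eC θ)
        = fun z : ℂ => (ContinuousLinearMap.mul ℝ ℂ (eC θ)) z := by
      funext z
      simp [mul_comm]
    rw [heq]
    exact h
  have := (hasDg (x * eC θ) hne).comp x hmul
  exact this

lemma normFd_le (θ : ℝ) (x : ℂ) (hx : ‖x‖ ≤ 1/2) : ‖Fd x θ‖ ≤ 300 := by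
  have h1 : ‖x * eC θ‖ ≤ 1/2 := by
    rw [norm_mul, abs_eC, mul_one]; exact hx
  calc ‖Fd x θ‖ ≤ ‖Dg (x * eC θ)‖ * ‖ContinuousLinearMap.mul ℝ ℂ (eC θ)‖ :=
      ContinuousLinearMap.opNorm_comp_le _ _
    _ ≤ 300 * 1 := by
        apply mul_le_mul (Dg_norm_le _ h1) ?_ (norm_nonneg _) (by norm_num)
        calc ‖ContinuousLinearMap.mul ℝ ℂ (eC θ)‖ ≤ ‖eC θ‖ :=
            ContinuousLinearMap.opNorm_mul_apply_le _ _ _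
          _ = 1 := by rw [abs_eC]
    _ = 300 := by norm_num

lemma contFd0 : Continuous fun θ : ℝ => Fd 0 θ := by
  have heq : (fun θ : ℝ => Fd 0 θ)
      = fun θ : ℝ => (ContinuousLinearMap.compL ℝ ℂ ℂ ℝ (Dg 0))
          (ContinuousLinearMap.mul ℝ ℂ (eC θ)) := by
    funext θ
    simp only [Fd, zero_mul]
    rfl
  rw [heq]
  exact (ContinuousLinearMap.compL ℝ ℂ ℂ ℝ (Dg 0)).continuous.comp
    ((ContinuousLinearMap.mul ℝ ℂ).continuous.comp continuous_eC)

lemma hasDerivMain (a b : ℝ) :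
    HasFDerivAt (fun z : ℂ => ∫ θ in a..b, K2ker (z * eC θ))
      (∫ θ in a..b, Fd 0 θ) 0 := by
  apply intervalIntegral.hasFDerivAt_integral_of_dominated_of_fderiv_le
    (F := fun z θ => K2ker (z * eC θ)) (F' := fun z θ => Fd z θ) (bound := fun _ => 300)
    (s := Metric.ball (0:ℂ) (1/2)) (Metric.ball_mem_nhds _ (by norm_num))
  · filter_upwards [Metric.ball_mem_nhds (0:ℂ) one_pos] with x hx
    have : ‖x‖ < 1 := by
      simpa using mem_ball_zero_iff.mp hx
    exact (contF x this).aestronglyMeasurable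
  · exact (contF 0 (by simp)).intervalIntegrable a b
  · exact contFd0.aestronglyMeasurable
  · filter_upwards with θ _ x hx
    have : ‖x‖ ≤ 1/2 := by
      have := mem_ball_zero_iff.mp hx
      linarith
    exact normFd_le θ x this
  · exact intervalIntegrable_const
  · filter_upwards with θ _ x hx
    have : ‖x‖ < 1 := by
      have := mem_ball_zero_iff.mp hx
      linarith
    exact hdiffF θ x this

lemma eval_L (a b : ℝ) (v : ℂ) :
    (∫ θ in a..b, Fd 0 θ) v = ∫ θ in a..b, 2 * (eC θ * v).re := by
  rw [ContinuousLinearMap.intervalIntegral_apply (contFd0.intervalIntegrable a b) v]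
  apply intervalIntegral.integral_congr
  intro θ _
  simp only [Fd, ContinuousLinearMap.comp_apply, zero_mul]
  rw [show (ContinuousLinearMap.mul ℝ ℂ (eC θ)) v = eC θ * v from rfl, Dg_zero_apply]

lemma eval_L_one (a b : ℝ) :
    (∫ θ in a..b, Fd 0 θ) 1 = 2 * (Real.sin b - Real.sin a) := by
  rw [eval_L]
  have : ∀ θ : ℝ, 2 * (eC θ * 1).re = 2 * Real.cos θ := by
    intro θ; rw [mul_one, eC_re]
  rw [intervalIntegral.integral_congr (fun θ _ => this θ),
    intervalIntegral.integral_const_mul, integral_cos]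

lemma eval_L_I (a b : ℝ) :
    (∫ θ in a..b, Fd 0 θ) Complex.I = 2 * (Real.cos a - Real.cos b) := by
  rw [eval_L]
  have : ∀ θ : ℝ, 2 * (eC θ * Complex.I).re = 2 * Real.sin θ := by
    intro θ; rw [eC_mul_I_re]
  rw [intervalIntegral.integral_congr (fun θ _ => this θ),
    intervalIntegral.integral_const_mul, integral_sin]


/-- Sharpness of the bound `‖D_u(0)‖ ≤ 4/π`: the extremal map
`U = K₂[χ_{𝕋⁺} - χ_{𝕋⁻}]` satisfies `U_z(0) = -2i/π`, hence
`|U_z(0)| + |U_{z̄}(0)| = 4/π`. -/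
theorem stmt6 (U : ℂ → ℂ)
    (hU : ∀ z : ℂ, ‖z‖ < 1 →
      U z = ((((∫ θ in (0:ℝ)..Real.pi, K2ker (z * Complex.exp (-(θ:ℂ) * Complex.I)))
              - ∫ θ in Real.pi..(2 * Real.pi),
                  K2ker (z * Complex.exp (-(θ:ℂ) * Complex.I)))
             / (2 * Real.pi) : ℝ) : ℂ)) :
    wderivZ U 0 = -2 * Complex.I / Real.pi
    ∧ ‖wderivZ U 0‖ + ‖wderivZbar U 0‖ = 4 / Real.pi := by
  have hA := hasDerivMain 0 Real.pi
  have hB := hasDerivMain Real.pi (2 * Real.pi)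
  have hAB := (hA.sub hB).const_mul ((2 * Real.pi)⁻¹)
  have hV := Complex.ofRealCLM.hasFDerivAt.comp (0:ℂ) hAB
  have hUe : U =ᶠ[nhds (0:ℂ)] (⇑Complex.ofRealCLM ∘ fun z =>
      (2 * Real.pi)⁻¹ * ((∫ θ in (0:ℝ)..Real.pi, K2ker (z * eC θ))
        - ∫ θ in Real.pi..(2 * Real.pi), K2ker (z * eC θ))) := by
    filter_upwards [Metric.ball_mem_nhds (0:ℂ) one_pos] with z hz
    have hz1 : ‖z‖ < 1 := by
      simpa using mem_ball_zero_iff.mp hz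
    rw [hU z hz1]
    simp only [Function.comp_apply, Complex.ofRealCLM_apply, eC]
    rw [div_eq_inv_mul]
  have hU0 := hV.congr_of_eventuallyEq hUe
  have hfd := hU0.fderiv
  have dval : ∀ v : ℂ, fderiv ℝ U 0 v =
      (((2 * Real.pi)⁻¹ * ((∫ θ in (0:ℝ)..Real.pi, Fd 0 θ) v
        - (∫ θ in Real.pi..(2 * Real.pi), Fd 0 θ) v) : ℝ) : ℂ) := by
    intro v
    rw [hfd]
    simp [ContinuousLinearMap.comp_apply, ContinuousLinearMap.smul_apply,
      ContinuousLinearMap.sub_apply, smul_eq_mul]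
  have d1 : fderiv ℝ U 0 1 = 0 := by
    rw [dval 1, eval_L_one, eval_L_one]
    simp [Real.sin_two_pi]
  have dI : fderiv ℝ U 0 Complex.I = ((4 / Real.pi : ℝ) : ℂ) := by
    rw [dval Complex.I, eval_L_I, eval_L_I]
    have h8 : (2*Real.pi)⁻¹ * (2*(Real.cos 0 - Real.cos Real.pi)
        - 2*(Real.cos Real.pi - Real.cos (2*Real.pi))) = 4 / Real.pi := by
      rw [Real.cos_zero, Real.cos_pi, Real.cos_two_pi]
      field_simp
      ring
    rw [h8]
  have hπ : (Real.pi : ℂ) ≠ 0 := by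
    exact_mod_cast Real.pi_ne_zero
  have hz : wderivZ U 0 = -2 * Complex.I / Real.pi := by
    rw [wderivZ, d1, dI]
    push_cast
    field_simp
    ring
  have hzb : wderivZbar U 0 = 2 * Complex.I / Real.pi := by
    rw [wderivZbar, d1, dI]
    push_cast
    field_simp
    ring
  refine ⟨hz, ?_⟩
  rw [hz, hzb]
  rw [norm_div, norm_div]
  simp only [Complex.norm_real, Real.norm_eq_abs, _root_.abs_of_pos Real.pi_pos]
  rw [show ‖-2 * Complex.I‖ = 2 by simp, show ‖2 * Complex.I‖ = 2 by simp]
  rw [← add_div]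
  norm_num
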